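/- Let F be a field, V a vector space over F, S ⊆ V a subspace, and {v_i}_{i∈I} a finite nonempty family of vectors of V which is linearly independent over F and satisfies S ∩ span_F{v_i : i ∈ I} ≠ {0}. Suppose I is minimal with the property that there exist scalars c_i ∈ F∖{0} (i ∈ I) with Σ_{i∈I} c_i v_i ∈ S; that is, no proper nonempty subset J ⊊ I admits scalars c_i ∈ F∖{0} (i ∈ J) with Σ_{i∈J} c_i v_i ∈ S. Then dim_F (S ∩ span_F{v_i : i ∈ I}) = 1. -/
import Mathlib


/-- Let `F` be a field, `V` a vector space over `F`, `S ⊆ V` a subspace and `(v_i)_{i ∈ ι}`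
a finite nonempty linearly independent family with `S ∩ span{v_i} ≠ {0}`.  If `ι` is
minimal with the property that some combination `Σ c_i v_i` with all `c_i ≠ 0` lies in `S`
(no proper nonempty subset admits such a combination), then
`dim_F (S ∩ span{v_i : i ∈ ι}) = 1`. -/
theorem finrank_inf_span_eq_one_of_minimal
    {F V : Type*} [Field F] [AddCommGroup V] [Module F V]
    (S : Submodule F V) {ι : Type*} [Fintype ι] [Nonempty ι] (v : ι → V)
    (hind : LinearIndependent F v)
    (hne : S ⊓ Submodule.span F (Set.range v) ≠ ⊥)
    (hex : ∃ c : ι → F, (∀ i, c i ≠ 0) ∧ (∑ i, c i • v i) ∈ S)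
    (hmin : ∀ J : Finset ι, J.Nonempty → J ≠ Finset.univ →
      ¬ ∃ c : ι → F, (∀ i ∈ J, c i ≠ 0) ∧ (∑ i ∈ J, c i • v i) ∈ S) :
    Module.finrank F ↥(S ⊓ Submodule.span F (Set.range v)) = 1 := by
  obtain ⟨c, hc, hcS⟩ := hex
  set w : V := ∑ i, c i • v i with hw
  have hwspan : w ∈ Submodule.span F (Set.range v) :=
    Submodule.sum_mem _ fun i _ => Submodule.smul_mem _ _ (Submodule.subset_span ⟨i, rfl⟩)
  have hwmem : w ∈ S ⊓ Submodule.span F (Set.range v) := ⟨hcS, hwspan⟩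
  have hw0 : w ≠ 0 := by
    intro h
    exact hc (Classical.arbitrary ι)
      (linearIndependent_iff'.mp hind Finset.univ c (by simpa using h) _ (Finset.mem_univ _))
  -- key: any element of S of the form ∑ d i • v i with some zero coefficient is 0
  have key : ∀ d : ι → F, (∑ i, d i • v i) ∈ S → (∃ j, d j = 0) → ∀ i, d i = 0 := by
    rintro d hdS ⟨j, hj⟩
    classical
    by_contra h
    push_neg at h
    obtain ⟨k, hk⟩ := h
    set J := Finset.univ.filter (fun i => d i ≠ 0) with hJ
    have hJne : J.Nonempty := ⟨k, by simp [hJ, hk]⟩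
    have hJne' : J ≠ Finset.univ := by
      intro h
      have : j ∈ J := h ▸ Finset.mem_univ j
      simp [hJ] at this
      exact this hj
    apply hmin J hJne hJne'
    refine ⟨d, fun i hi => by simpa [hJ] using hi, ?_⟩
    have heq : ∑ i ∈ J, d i • v i = ∑ i, d i • v i := by
      apply Finset.sum_subset (Finset.subset_univ J)
      intro i _ hi
      simp only [hJ, Finset.mem_filter, Finset.mem_univ, true_and, not_not] at hi
      simp [hi]
    rw [heq]; exact hdS
  apply finrank_eq_one (⟨w, hwmem⟩ : ↥(S ⊓ Submodule.span F (Set.range v)))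
  · intro h
    exact hw0 (by simpa using congrArg Subtype.val h)
  · rintro ⟨x, hxS, hxsp⟩
    obtain ⟨d, hd⟩ := (Submodule.mem_span_range_iff_exists_fun F).mp hxsp
    obtain ⟨j0⟩ := ‹Nonempty ι›
    set a : F := d j0 / c j0 with ha
    have hsum : ∑ i, (d i - a * c i) • v i = x - a • w := by
      simp [sub_smul, mul_smul, Finset.sum_sub_distrib, hd, hw, Finset.smul_sum]
    have hmemS : (∑ i, (d i - a * c i) • v i) ∈ S := by
      rw [hsum]; exact S.sub_mem hxS (S.smul_mem a hcS)
    have hall : ∀ i, d i - a * c i = 0 := by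
      apply key _ hmemS
      exact ⟨j0, by rw [ha, div_mul_cancel₀ _ (hc j0), sub_self]⟩
    have hx : x = a • w := by
      have := hsum
      rw [show (∑ i, (d i - a * c i) • v i) = 0 by
        simp only [fun i => hall i]; simp] at this
      linear_combination (norm := module) -this
    refine ⟨a, ?_⟩
    ext
    simpa using hx.symm
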